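/- Under the hypotheses of the summability lemma (f bounded below, ρ a forcing function satisfying ρ(β·σ) ≤ β̄·ρ(σ) and ρ(γ·σ) ≤ γ̄·ρ(σ) with β̄ < 1 < γ̄, and iterates following the sufficient-decrease/step-size update rule), the sequence of step sizes converges to zero: lim_{k→∞} σ_k = 0. -/

import Mathlib

open Filter

theorem stmt2 (n : ℕ) (f : (Fin n → ℝ) → ℝ) (flow : ℝ)
    (hbd : ∀ x, flow ≤ f x)
    (x : ℕ → (Fin n → ℝ)) (σ : ℕ → ℝ) (hσ : ∀ k, 0 < σ k)
    (ρ : ℝ → ℝ) (hρcont : Continuous ρ) (hρmono : Monotone ρ)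
    (hρpos : ∀ s, 0 < s → 0 < ρ s) (hρ0 : ρ 0 = 0)
    (β γ : ℝ) (hβ0 : 0 < β) (hβ1 : β < 1) (hγ : 1 < γ)
    (βb γb : ℝ) (hβb : βb < 1) (hγb : 1 < γb)
    (hρβ : ∀ s, 0 < s → ρ (β * s) ≤ βb * ρ s)
    (hργ : ∀ s, 0 < s → ρ (γ * s) ≤ γb * ρ s)
    (hstep : ∀ k,
      (f (x (k + 1)) ≤ f (x k) - ρ (σ k) ∧ σ (k + 1) = γ * σ k) ∨
      (x (k + 1) = x k ∧ σ (k + 1) = β * σ k)) :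
    Tendsto σ atTop (nhds 0) := by
  set a : ℕ → ℝ := fun k => ρ (σ k) with ha
  have hapos : ∀ k, 0 < a k := fun k => hρpos _ (hσ k)
  set c : ℝ := 1 / (2 * (γb - 1)) with hc
  have hγb1 : 0 < γb - 1 := by linarith
  have hcpos : 0 < c := by positivity
  have hcγ : c * (γb - 1) = 1 / 2 := by
    field_simp [hc]
    have h2 : c * (2 * (γb - 1)) = 1 := by
      rw [hc]; exact one_div_mul_cancel (mul_pos two_pos hγb1).ne'
    linear_combination h2
  set δ : ℝ := min (1 / 2) (c * (1 - βb)) with hδ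
  have hδpos : 0 < δ := by
    apply lt_min (by norm_num)
    have : 0 < 1 - βb := by linarith
    positivity
  set Φ : ℕ → ℝ := fun k => (f (x k) - flow) + c * a k with hΦ
  have hΦnn : ∀ k, 0 ≤ Φ k := by
    intro k
    have := hbd (x k)
    have := (hapos k).le
    have : 0 ≤ c * a k := by positivity
    simp only [hΦ]
    linarith [hbd (x k)]
  have key : ∀ k, δ * a k ≤ Φ k - Φ (k + 1) := by
    intro k
    rcases hstep k with ⟨hf, hs⟩ | ⟨hx, hs⟩
    · have h1 : a (k + 1) ≤ γb * a k := by
        simp only [ha, hs]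
        exact hργ _ (hσ k)
      have h2 : δ * a k ≤ (1 / 2) * a k :=
        mul_le_mul_of_nonneg_right (min_le_left _ _) (hapos k).le
      have h3 : c * a (k + 1) ≤ c * (γb * a k) :=
        mul_le_mul_of_nonneg_left h1 hcpos.le
      simp only [hΦ]
      nlinarith [hapos k, hcγ]
    · have h1 : a (k + 1) ≤ βb * a k := by
        simp only [ha, hs]
        exact hρβ _ (hσ k)
      have h2 : δ * a k ≤ (c * (1 - βb)) * a k :=
        mul_le_mul_of_nonneg_right (min_le_right _ _) (hapos k).le
      have h3 : c * a (k + 1) ≤ c * (βb * a k) :=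
        mul_le_mul_of_nonneg_left h1 hcpos.le
      simp only [hΦ, hx]
      nlinarith
  have hsum : ∀ N, ∑ k ∈ Finset.range N, a k ≤ Φ 0 / δ := by
    intro N
    have htel : ∑ k ∈ Finset.range N, (Φ k - Φ (k + 1)) = Φ 0 - Φ N := by
      rw [Finset.sum_range_sub']
    have h1 : ∑ k ∈ Finset.range N, δ * a k ≤ Φ 0 - Φ N :=
      htel ▸ Finset.sum_le_sum (fun k _ => key k)
    rw [← Finset.mul_sum] at h1
    have := hΦnn N
    rw [le_div_iff₀ hδpos]
    linarith [h1]
  have hsummable : Summable a :=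
    summable_of_sum_range_le (fun k => (hapos k).le) hsum
  have hato : Tendsto a atTop (nhds 0) := hsummable.tendsto_atTop_zero
  rw [Metric.tendsto_atTop]
  intro ε hε
  have hρε : 0 < ρ ε := hρpos ε hε
  obtain ⟨N, hN⟩ := (Metric.tendsto_atTop.mp hato) (ρ ε) hρε
  refine ⟨N, fun k hk => ?_⟩
  have hak : a k < ρ ε := by
    have := hN k hk
    rw [Real.dist_eq, abs_sub_lt_iff] at this
    linarith [this.1]
  have hσε : σ k < ε := by
    by_contra h
    push_neg at h
    exact absurd (hρmono h) (not_le.mpr hak)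
  rw [Real.dist_eq, abs_sub_lt_iff]
  constructor <;> [linarith; linarith [hσ k]]
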